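/- Let A=(a_ij) be a doubly-laced symmetrizable GCM such that X_sh={p} consists of a single index. Then ⟨w_1·α_p∨, w_2·α_p⟩ is even for all w_1,w_2∈W. In particular there do not exist two real roots β_1,β_2∈W·α_p with ⟨β_1∨,β_2⟩=⟨β_2∨,β_1⟩=−1, so there is no π-system of type A_2 in A contained wholly in the shortest real roots. The same conclusions hold when X_long={q} is a single index, with W·α_q (the longest real roots) in place of W·α_p. -/
import Mathlib


/-- An integer matrix is a generalized Cartan matrix. -/
def IsGCM {n : ℕ} (A : Matrix (Fin n) (Fin n) ℤ) : Prop :=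
  (∀ i, A i i = 2) ∧ (∀ i j, i ≠ j → A i j ≤ 0) ∧ (∀ i j, A i j = 0 → A j i = 0)

/-- `d` is a symmetrizer of `A`: positive rationals with `dᵢ aᵢⱼ = dⱼ aⱼᵢ`. -/
def IsSymmetrizer {n : ℕ} (A : Matrix (Fin n) (Fin n) ℤ) (d : Fin n → ℚ) : Prop :=
  (∀ i, 0 < d i) ∧ ∀ i j, d i * A i j = d j * A j i

/-- The pairing `⟨γ∨, β⟩` between the coroot lattice and the root lattice:
in coordinates (γ in the coroot basis, β in the root basis) it is `∑ γᵢ aᵢⱼ βⱼ`,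
so that `⟨αᵢ∨, αⱼ⟩ = aᵢⱼ`. -/
def pairing {n : ℕ} (A : Matrix (Fin n) (Fin n) ℤ) (y x : Fin n → ℤ) : ℤ :=
  ∑ i, ∑ j, y i * A i j * x j

/-- Simple reflection `s_k` acting on the root lattice: `s_k x = x − ⟨α_k∨, x⟩ α_k`. -/
def sRoot {n : ℕ} (A : Matrix (Fin n) (Fin n) ℤ) (k : Fin n) (x : Fin n → ℤ) : Fin n → ℤ :=
  fun i => x i - (if i = k then ∑ j, A k j * x j else 0)

/-- Simple reflection `s_k` acting on the coroot lattice: `s_k(αⱼ∨) = αⱼ∨ − aⱼₖ α_k∨`. -/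
def sCoroot {n : ℕ} (A : Matrix (Fin n) (Fin n) ℤ) (k : Fin n) (y : Fin n → ℤ) : Fin n → ℤ :=
  fun i => y i - (if i = k then ∑ j, y j * A j k else 0)

/-- Action on the root lattice of a Weyl group element given as a word in simple reflections. -/
def actRoot {n : ℕ} (A : Matrix (Fin n) (Fin n) ℤ) (w : List (Fin n)) (x : Fin n → ℤ) :
    Fin n → ℤ :=
  w.foldr (sRoot A) x

/-- Action on the coroot lattice of a Weyl group element given as a word in simple reflections. -/
def actCoroot {n : ℕ} (A : Matrix (Fin n) (Fin n) ℤ) (w : List (Fin n)) (y : Fin n → ℤ) :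
    Fin n → ℤ :=
  w.foldr (sCoroot A) y


private lemma pairing_adj' {n : ℕ} (A : Matrix (Fin n) (Fin n) ℤ) (k : Fin n) (y x : Fin n → ℤ) :
    pairing A (sCoroot A k y) x = pairing A y (sRoot A k x) := by
  unfold pairing sCoroot sRoot
  simp only [sub_mul, mul_sub, ite_mul, mul_ite, zero_mul, mul_zero,
    Finset.sum_sub_distrib, Finset.sum_ite_irrel, Finset.sum_const_zero,
    Finset.sum_ite_eq', Finset.mem_univ, if_true]
  congr 1
  have h1 : ∑ m, (∑ j, y j * A j k) * A k m * x m
      = (∑ j, y j * A j k) * ∑ m, A k m * x m := by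
    rw [Finset.mul_sum]; exact Finset.sum_congr rfl fun m _ => by ring
  have h2 : ∑ i, y i * A i k * ∑ j, A k j * x j
      = (∑ i, y i * A i k) * ∑ j, A k j * x j := (Finset.sum_mul ..).symm
  rw [h1, h2]

private lemma pairing_act' {n : ℕ} (A : Matrix (Fin n) (Fin n) ℤ) (w : List (Fin n))
    (y x : Fin n → ℤ) :
    pairing A (actCoroot A w y) x = pairing A y (actRoot A w.reverse x) := by
  induction w generalizing x with
  | nil => rfl
  | cons k t ih =>
    have h1 : actCoroot A (k :: t) y = sCoroot A k (actCoroot A t y) := rfl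
    have h2 : actRoot A (t.reverse ++ [k]) x = actRoot A t.reverse (sRoot A k x) := by
      unfold actRoot
      rw [List.foldr_append]
      rfl
    rw [h1, pairing_adj', ih, List.reverse_cons, h2]

private lemma pairing_act'' {n : ℕ} (A : Matrix (Fin n) (Fin n) ℤ) (w : List (Fin n))
    (y x : Fin n → ℤ) :
    pairing A y (actRoot A w x) = pairing A (actCoroot A w.reverse y) x := by
  rw [pairing_act', List.reverse_reverse]

private lemma pairing_single_left {n : ℕ} (A : Matrix (Fin n) (Fin n) ℤ) (p : Fin n)
    (x : Fin n → ℤ) :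
    pairing A (Pi.single p 1) x = ∑ j, A p j * x j := by
  unfold pairing
  rw [Finset.sum_eq_single p]
  · exact Finset.sum_congr rfl fun j _ => by rw [Pi.single_eq_same]; ring
  · intro i _ hi
    simp [Pi.single_eq_of_ne hi]
  · simp

private lemma pairing_single_right {n : ℕ} (A : Matrix (Fin n) (Fin n) ℤ) (q : Fin n)
    (y : Fin n → ℤ) :
    pairing A y (Pi.single q 1) = ∑ i, y i * A i q := by
  unfold pairing
  refine Finset.sum_congr rfl fun i _ => ?_
  rw [Finset.sum_eq_single q]
  · rw [Pi.single_eq_same]; ring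
  · intro j _ hj; simp [Pi.single_eq_of_ne hj]
  · simp

private lemma neg_mul_cases {a b : ℤ} (ha : a ≤ 0) (_hb : b ≤ 0) (h : a * b = 2) :
    (a = -1 ∧ b = -2) ∨ (a = -2 ∧ b = -1) := by
  have hd : a ∣ 2 := ⟨b, h.symm⟩
  have hd' : (-a) ∣ 2 := neg_dvd.mpr hd
  have ha0 : a ≠ 0 := by rintro rfl; simp at h
  have h2' : -a ≤ 2 := Int.le_of_dvd (by norm_num) hd'
  have hal : -2 ≤ a := by omega
  have hau : a ≤ -1 := by omega
  interval_cases a <;> omega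

/-- Let `A` be a doubly-laced symmetrizable GCM. If `X_sh = {p}` is a
single index, then `⟨w₁·α_p∨, w₂·α_p⟩` is even for all Weyl group elements `w₁, w₂`;
in particular no two real roots in `W·α_p` pair to `(−1, −1)`, so there is no π-system of
type `A₂` contained wholly in the shortest real roots. The same holds with
`X_long = {q}` and `W·α_q` (the longest real roots). -/
theorem no_A2_in_short_singleton {n : ℕ} (A : Matrix (Fin n) (Fin n) ℤ) (hA : IsGCM A)
    (d : Fin n → ℚ) (hd : IsSymmetrizer A d)
    (hlaced : ∀ i j, i ≠ j → A i j * A j i = 0 ∨ A i j * A j i = 1 ∨ A i j * A j i = 2)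
    (hattained : ∃ i j, i ≠ j ∧ A i j * A j i = 2) :
    (∀ p : Fin n, (∀ i, (∀ k, d i ≤ d k) ↔ i = p) →
      (∀ w₁ w₂ : List (Fin n),
        2 ∣ pairing A (actCoroot A w₁ (Pi.single p 1)) (actRoot A w₂ (Pi.single p 1))) ∧
      ¬ ∃ w₁ w₂ : List (Fin n),
        pairing A (actCoroot A w₁ (Pi.single p 1)) (actRoot A w₂ (Pi.single p 1)) = -1 ∧
        pairing A (actCoroot A w₂ (Pi.single p 1)) (actRoot A w₁ (Pi.single p 1)) = -1)
    ∧
    (∀ q : Fin n, (∀ i, (∀ k, d k ≤ d i) ↔ i = q) →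
      (∀ w₁ w₂ : List (Fin n),
        2 ∣ pairing A (actCoroot A w₁ (Pi.single q 1)) (actRoot A w₂ (Pi.single q 1))) ∧
      ¬ ∃ w₁ w₂ : List (Fin n),
        pairing A (actCoroot A w₁ (Pi.single q 1)) (actRoot A w₂ (Pi.single q 1)) = -1 ∧
        pairing A (actCoroot A w₂ (Pi.single q 1)) (actRoot A w₁ (Pi.single q 1)) = -1) := by
  
  obtain ⟨h2, hle, hzero⟩ := hA
  obtain ⟨hpos, hsym⟩ := hd
  constructor
  · intro p hp
    have hmin : ∀ k, d p ≤ d k := (hp p).mpr rfl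
    -- every entry of row p is even
    have hrow : ∀ j, 2 ∣ A p j := by
      intro j
      by_cases hj : j = p
      · subst hj; rw [h2]
      · have hj' : p ≠ j := fun h => hj h.symm
        by_cases h0 : A p j = 0
        · rw [h0]; exact dvd_zero 2
        · have h0' : A j p ≠ 0 := fun h => h0 (hzero j p h)
          rcases hlaced p j hj' with h | h | h
          · exact absurd (mul_eq_zero.mp h) (by push_neg; exact ⟨h0, h0'⟩)
          · rcases Int.mul_eq_one_iff_eq_one_or_neg_one.mp h with ⟨h1, _⟩ | ⟨h1, h1'⟩
            · exact absurd h1 (by have := hle p j hj'; omega)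
            · -- A p j = A j p = -1 forces d p = d j, so j = p
              exfalso
              have hs := hsym p j
              rw [h1, h1'] at hs
              have hdpj : d p = d j := by push_cast at hs; linarith
              have : ∀ k, d j ≤ d k := fun k => hdpj ▸ hmin k
              exact hj ((hp j).mp this)
          · rcases neg_mul_cases (hle p j hj') (hle j p (Ne.symm hj')) h with ⟨h1, h1'⟩ | ⟨h1, _⟩
            · -- A p j = -1, A j p = -2 forces d p = 2 d j > d j, contradiction
              exfalso
              have hs := hsym p j
              rw [h1, h1'] at hs
              push_cast at hs
              have := hpos j
              have := hmin j
              linarith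
            · rw [h1]; norm_num
    constructor
    · intro w₁ w₂
      rw [pairing_act', pairing_single_left]
      exact Finset.dvd_sum fun j _ => Dvd.dvd.mul_right (hrow j) _
    · rintro ⟨w₁, w₂, hpair, -⟩
      rw [pairing_act', pairing_single_left] at hpair
      have hdvd : (2 : ℤ) ∣ -1 := by
        rw [← hpair]
        exact Finset.dvd_sum fun j _ => Dvd.dvd.mul_right (hrow j) _
      omega
  · intro q hq
    have hmax : ∀ k, d k ≤ d q := (hq q).mpr rfl
    -- every entry of column q is even
    have hcol : ∀ i, 2 ∣ A i q := by
      intro i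
      by_cases hi : i = q
      · subst hi; rw [h2]
      · by_cases h0 : A i q = 0
        · rw [h0]; exact dvd_zero 2
        · have h0' : A q i ≠ 0 := fun h => h0 (hzero q i h)
          rcases hlaced i q hi with h | h | h
          · exact absurd (mul_eq_zero.mp h) (by push_neg; exact ⟨h0, h0'⟩)
          · rcases Int.mul_eq_one_iff_eq_one_or_neg_one.mp h with ⟨h1, _⟩ | ⟨h1, h1'⟩
            · exact absurd h1 (by have := hle i q hi; omega)
            · exfalso
              have hs := hsym i q
              rw [h1, h1'] at hs
              have hdiq : d i = d q := by push_cast at hs; linarith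
              have : ∀ k, d k ≤ d i := fun k => hdiq ▸ hmax k
              exact hi ((hq i).mp this)
          · rcases neg_mul_cases (hle i q hi) (hle q i (Ne.symm hi)) h with ⟨h1, h1'⟩ | ⟨h1, _⟩
            · exfalso
              have hs := hsym i q
              rw [h1, h1'] at hs
              push_cast at hs
              have := hpos q
              have := hmax i
              linarith
            · rw [h1]; norm_num
    constructor
    · intro w₁ w₂
      rw [pairing_act'', pairing_single_right]
      exact Finset.dvd_sum fun i _ => Dvd.dvd.mul_left (hcol i) _
    · rintro ⟨w₁, w₂, hpair, -⟩
      rw [pairing_act'', pairing_single_right] at hpair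
      have hdvd : (2 : ℤ) ∣ -1 := by
        rw [← hpair]
        exact Finset.dvd_sum fun i _ => Dvd.dvd.mul_left (hcol i) _
      omega
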